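/- For all real s in (0, 1/4], the inequality e^{s/2}(e^{s/2}-1)(1+s/2)^2/s - (e^s - 1)(1+s)^2/(2s) ≤ -3s/8 holds. -/

import Mathlib

theorem exp_halfstep_inequality (s : ℝ) (hs : 0 < s) (hs' : s ≤ 1/4) :
    Real.exp (s/2) * (Real.exp (s/2) - 1) * (1 + s/2)^2 / s
      - (Real.exp s - 1) * (1 + s)^2 / (2*s) ≤ -(3*s/8) := by
  set t := s/2 with ht_def
  have ht : 0 < t := by positivity
  have ht' : t ≤ 1/8 := by simp only [ht_def]; linarith
  set x := Real.exp t with hx_def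
  have hx2 : Real.exp s = x * x := by
    rw [hx_def, ← Real.exp_add]; congr 1; ring
  have hlow : 1 + t + t^2/2 + t^3/6 ≤ x := by
    have h := Real.sum_le_exp_of_nonneg ht.le 4
    simp [Finset.sum_range_succ, Nat.factorial] at h
    rw [hx_def]; nlinarith [h]
  have hup : x ≤ 1 + t + t^2/2 + t^3/6 + t^4 * (5/96) := by
    have h := Real.exp_bound' ht.le (by linarith : t ≤ 1) (n := 4) (by norm_num)
    simp [Finset.sum_range_succ, Nat.factorial] at h
    rw [hx_def]; nlinarith [h]
  have key : Real.exp (s/2) * (Real.exp (s/2) - 1) * (1 + s/2)^2 / s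
      - (Real.exp s - 1) * (1 + s)^2 / (2*s)
      = (2*(x*(x-1)*(1+t)^2) - (x*x-1)*(1+2*t)^2) / (2*s) := by
    rw [hx2, ← hx_def, ht_def]
    field_simp
  rw [key, div_le_iff₀ (by linarith : (0:ℝ) < 2*s)]
  have hseq : s = 2*t := by rw [ht_def]; ring
  rw [hseq]
  nlinarith [hlow, hup, ht, ht', sq_nonneg t, sq_nonneg (t^2), sq_nonneg (x - 1 - t), mul_pos ht ht]
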